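/- Let A be a finite set, P a real matrix indexed by A, and suppose that for every subset B ⊆ A the matrix I − P_B is invertible, where P_B is the submatrix of P with rows and columns indexed by B; write G_B = (I − P_B)⁻¹. For distinct points x₁,…,x_k ∈ A set A_j = A \ {x₁,…,x_{j−1}} and F(A; x₁,…,x_k) = ∏_{j=1}^k G_{A_j}(x_j,x_j). Then for every permutation σ of {1,…,k}, F(A; x_{σ(1)},…,x_{σ(k)}) = F(A; x₁,…,x_k); i.e. F depends only on the set V = {x₁,…,x_k} and not on the ordering of its elements. -/

import Mathlib

open Matrix

/-- The principal submatrix of `P` with rows and columns indexed by the subset `B`. -/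
def Matrix.restrictFinset {A : Type*} (P : Matrix A A ℝ) (B : Finset A) :
    Matrix {a // a ∈ B} {a // a ∈ B} ℝ :=
  P.submatrix (fun i => (i : A)) fun j => (j : A)

/-- The diagonal entry `G_B(a,a)` of the Green's function `G_B = (I − P_B)⁻¹`
(by convention `0` if `a ∉ B`). -/
noncomputable def greenDiag {A : Type*} [Fintype A] [DecidableEq A]
    (P : Matrix A A ℝ) (B : Finset A) (a : A) : ℝ :=
  if h : a ∈ B then (1 - P.restrictFinset B)⁻¹ ⟨a, h⟩ ⟨a, h⟩ else 0

/-- For an ordering `x : Fin k → A` of distinct points, `A_j = A \ {x_1,…,x_{j−1}}`. -/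
def avoid {A : Type*} [Fintype A] [DecidableEq A] {k : ℕ} (x : Fin k → A) (j : Fin k) :
    Finset A :=
  Finset.univ \ Finset.image x (Finset.univ.filter fun i => i < j)

/-- `F(A; x_1,…,x_k) = ∏_{j=1}^k G_{A_j}(x_j,x_j)`. -/
noncomputable def Ffun {A : Type*} [Fintype A] [DecidableEq A] {k : ℕ}
    (P : Matrix A A ℝ) (x : Fin k → A) : ℝ :=
  ∏ j : Fin k, greenDiag P (avoid x j) (x j)

lemma adjugate_zero_zero {n : ℕ} (M : Matrix (Fin (n+1)) (Fin (n+1)) ℝ) :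
    M.adjugate 0 0 = (M.submatrix Fin.succ Fin.succ).det := by
  rw [Matrix.adjugate_apply, Matrix.det_succ_row_zero]
  rw [Fintype.sum_eq_single (0 : Fin (n+1)) (fun j hj => by
    simp [Matrix.updateRow_apply, Pi.single_apply, hj.symm, Ne.symm hj])]
  have h : (M.updateRow 0 (Pi.single 0 1)).submatrix Fin.succ ((0 : Fin (n+1)).succAbove)
      = M.submatrix Fin.succ Fin.succ := by
    ext i j
    simp [Matrix.updateRow_ne (Fin.succ_ne_zero i), Fin.succAbove_zero]
  rw [h]
  simp

lemma adjugate_diag {n : Type*} [Fintype n] [DecidableEq n] (M : Matrix n n ℝ) (i : n) :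
    M.adjugate i i
      = (M.submatrix (Subtype.val : {j // j ≠ i} → n) Subtype.val).det := by
  have hpos : 0 < Fintype.card n := Fintype.card_pos_iff.mpr ⟨i⟩
  obtain ⟨m, hm⟩ : ∃ m, Fintype.card n = m + 1 :=
    ⟨Fintype.card n - 1, (Nat.succ_pred_eq_of_pos hpos).symm⟩
  let e₁ : Fin (m+1) ≃ n := (finCongr hm.symm).trans (Fintype.equivFin n).symm
  let e : Fin (m+1) ≃ n := e₁.trans (Equiv.swap (e₁ 0) i)
  have he0 : e 0 = i := by simp [e]
  have key : M.adjugate i i = ((M.submatrix e e).submatrix Fin.succ Fin.succ).det := by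
    have h := adjugate_zero_zero (M.submatrix e e)
    rw [Matrix.adjugate_submatrix_equiv_self] at h
    simpa [he0] using h
  rw [key]
  have hinj : Function.Injective (fun a : Fin m => (⟨e a.succ, fun h =>
      Fin.succ_ne_zero a (e.injective (h.trans he0.symm))⟩ : {j // j ≠ i})) := by
    intro a b hab
    have h : e a.succ = e b.succ := congrArg Subtype.val hab
    exact Fin.succ_injective _ (e.injective h)
  have hcard : Fintype.card (Fin m) = Fintype.card {j // j ≠ i} := by
    have h1 : Fintype.card {j // j ≠ i} = Fintype.card n - Fintype.card {j // j = i} :=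
      Fintype.card_subtype_compl _
    rw [h1, Fintype.card_subtype_eq, hm]
    simp
  let f : Fin m ≃ {j // j ≠ i} :=
    Equiv.ofBijective _ ((Fintype.bijective_iff_injective_and_card _).mpr ⟨hinj, hcard⟩)
  rw [← Matrix.det_submatrix_equiv_self f]
  rfl

lemma greenDiag_eq {A : Type*} [Fintype A] [DecidableEq A] (P : Matrix A A ℝ)
    (hinv : ∀ B : Finset A, IsUnit (1 - P.restrictFinset B)) (B : Finset A) (a : A)
    (h : a ∈ B) :
    greenDiag P B a
      = (1 - P.restrictFinset (B.erase a)).det / (1 - P.restrictFinset B).det := by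
  rw [greenDiag, dif_pos h, Matrix.inv_def]
  have hadj := adjugate_diag (1 - P.restrictFinset B) ⟨a, h⟩
  let g : {b // b ∈ B.erase a} ≃ {j : {b // b ∈ B} // j ≠ ⟨a, h⟩} :=
  { toFun := fun b => ⟨⟨b.1, Finset.mem_of_mem_erase b.2⟩,
      fun hb => (Finset.mem_erase.mp b.2).1 (congrArg Subtype.val hb)⟩
    invFun := fun j => ⟨j.1.1, Finset.mem_erase.mpr
      ⟨fun hja => j.2 (Subtype.ext hja), j.1.2⟩⟩
    left_inv := fun b => rfl
    right_inv := fun j => rfl }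
  have hsub : ((1 - P.restrictFinset B).submatrix
      (Subtype.val : {j // j ≠ (⟨a, h⟩ : {b // b ∈ B})} → _) Subtype.val).submatrix g g
      = 1 - P.restrictFinset (B.erase a) := by
    ext b c
    simp [Matrix.one_apply, Matrix.restrictFinset, g]
  have hdets : (1 - P.restrictFinset (B.erase a)).det
      = (1 - P.restrictFinset B).adjugate ⟨a, h⟩ ⟨a, h⟩ := by
    rw [hadj, ← hsub, Matrix.det_submatrix_equiv_self]
  rw [Matrix.smul_apply, hdets, Ring.inverse_eq_inv']
  rw [smul_eq_mul]
  ring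

lemma Ffun_eq {A : Type*} [Fintype A] [DecidableEq A] (P : Matrix A A ℝ)
    (hinv : ∀ B : Finset A, IsUnit (1 - P.restrictFinset B))
    {k : ℕ} (x : Fin k → A) (hx : Function.Injective x) :
    Ffun P x = (1 - P.restrictFinset (Finset.univ \ Finset.image x Finset.univ)).det
      / (1 - P.restrictFinset Finset.univ).det := by
  classical
  set V : ℕ → Finset A := fun n =>
    Finset.univ \ Finset.image x (Finset.univ.filter fun i => (i : ℕ) < n) with hV
  have hVavoid : ∀ j : Fin k, avoid x j = V j := fun j => rfl
  have hmem : ∀ j : Fin k, x j ∈ V (j : ℕ) := by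
    intro j
    simp only [hV, Finset.mem_sdiff, Finset.mem_univ, true_and, Finset.mem_image,
      Finset.mem_filter, not_exists, not_and]
    intro i hi hxi
    exact absurd (congrArg Fin.val (hx hxi)) (Nat.ne_of_lt hi)
  have herase : ∀ j : Fin k, (V (j : ℕ)).erase (x j) = V ((j : ℕ) + 1) := by
    intro j
    ext b
    simp only [hV, Finset.mem_erase, Finset.mem_sdiff, Finset.mem_univ, true_and,
      Finset.mem_image, Finset.mem_filter, not_exists, not_and, Nat.lt_succ_iff_lt_or_eq]
    constructor
    · rintro ⟨hne, hb⟩ i hi hxi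
      rcases hi with hi | hi
      · exact hb i hi hxi
      · exact hne (Fin.ext hi ▸ hxi).symm
    · intro hb
      exact ⟨fun hxb => hb j (Or.inr rfl) hxb.symm, fun i hi hxi => hb i (Or.inl hi) hxi⟩
  -- units
  let D : ℕ → ℝˣ := fun n => ((Matrix.isUnit_iff_isUnit_det _).mp (hinv (V n))).unit
  have hD : ∀ n, (D n : ℝ) = (1 - P.restrictFinset (V n)).det := fun n => rfl
  have hfac : ∀ j : Fin k, greenDiag P (avoid x j) (x j) = ((D ((j : ℕ) + 1) / D (j : ℕ) : ℝˣ) : ℝ) := by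
    intro j
    rw [hVavoid j, greenDiag_eq P hinv _ _ (hmem j), herase j, Units.val_div_eq_div_val, hD, hD]
  have : Ffun P x = ((∏ j : Fin k, (D ((j : ℕ) + 1) / D (j : ℕ)) : ℝˣ) : ℝ) := by
    have hcast : ((∏ j : Fin k, (D ((j : ℕ) + 1) / D (j : ℕ))) : ℝˣ).val
        = ∏ j : Fin k, ((D ((j : ℕ) + 1) / D (j : ℕ) : ℝˣ) : ℝ) :=
      map_prod (Units.coeHom ℝ) _ _
    rw [Ffun, hcast]
    exact Finset.prod_congr rfl fun j _ => hfac j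
  rw [this, Fin.prod_univ_eq_prod_range (fun n => D (n + 1) / D n) k,
    Finset.prod_range_div (fun n => D n) k, Units.val_div_eq_div_val, hD, hD]
  have h0 : V 0 = Finset.univ := by simp [hV]
  have hk : V k = Finset.univ \ Finset.image x Finset.univ := by
    simp only [hV]
    congr 1
    congr 1
    exact Finset.filter_true_of_mem fun i _ => i.isLt
  rw [h0, hk]

theorem stmt_8 {A : Type*} [Fintype A] [DecidableEq A] (P : Matrix A A ℝ)
    (hinv : ∀ B : Finset A, IsUnit (1 - P.restrictFinset B))
    {k : ℕ} (x : Fin k → A) (hx : Function.Injective x) (σ : Equiv.Perm (Fin k)) :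
    Ffun P (x ∘ σ) = Ffun P x := by
  rw [Ffun_eq P hinv (x ∘ σ) (hx.comp σ.injective), Ffun_eq P hinv x hx]
  have : Finset.image (x ∘ σ) Finset.univ = Finset.image x Finset.univ := by
    rw [← Finset.image_image]
    congr 1
    exact Finset.image_univ_equiv σ
  rw [this]
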